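/- Let A be n×n symmetric positive definite, B an n×m full-column-rank matrix, 𝒜 = [[A,B],[Bᵀ,0]] and 𝒜̂ = [[A,B],[Bᵀ,-C]] with C = BᵀA⁻¹B. If λ = 1 is an eigenvalue of 𝒜̂⁻¹𝒜 with eigenvector (v_u, v_t), then v_t = 0 and v_u is arbitrary nonzero; i.e., the eigenspace for λ = 1 is exactly {(v_u, 0) : v_u ∈ ℝⁿ}. -/

import Mathlib

open Matrix

lemma binj {n m : ℕ} (B : Matrix (Fin n) (Fin m) ℝ) (hB : B.rank = m)
    (y : Fin m → ℝ) (hy : B *ᵥ y = 0) : y = 0 := by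
  have hker : LinearMap.ker B.mulVecLin = ⊥ := by
    have h1 := LinearMap.finrank_range_add_finrank_ker B.mulVecLin
    rw [show Module.finrank ℝ (LinearMap.range B.mulVecLin) = B.rank from rfl, hB] at h1
    simp only [Module.finrank_pi, Fintype.card_fin] at h1
    have : Module.finrank ℝ (LinearMap.ker B.mulVecLin) = 0 := by omega
    exact Submodule.finrank_eq_zero.mp this
  have : y ∈ LinearMap.ker B.mulVecLin := by
    simpa [Matrix.mulVecLin_apply] using hy
  simpa [hker] using this

/-- For `C = BᵀA⁻¹B`, the eigenspace of the generalized eigenproblem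
`𝒜v = λ𝒜̂v` at `λ = 1` is exactly `{(v_u, 0)}`. -/
theorem racp_eigenspace_at_one
    (n m : ℕ)
    (A : Matrix (Fin n) (Fin n) ℝ) (hA : A.PosDef)
    (B : Matrix (Fin n) (Fin m) ℝ) (hB : B.rank = m)
    (C : Matrix (Fin m) (Fin m) ℝ) (hC : C = Bᵀ * A⁻¹ * B)
    (𝒜 : Matrix (Fin n ⊕ Fin m) (Fin n ⊕ Fin m) ℝ)
    (h𝒜 : 𝒜 = Matrix.fromBlocks A B Bᵀ 0)
    (𝒜hat : Matrix (Fin n ⊕ Fin m) (Fin n ⊕ Fin m) ℝ)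
    (h𝒜hat : 𝒜hat = Matrix.fromBlocks A B Bᵀ (-C)) :
    {v : Fin n ⊕ Fin m → ℝ | 𝒜 *ᵥ v = 𝒜hat *ᵥ v} =
      {v : Fin n ⊕ Fin m → ℝ | ∀ j : Fin m, v (Sum.inr j) = 0} := by
  ext v
  simp only [Set.mem_setOf_eq]
  set x : Fin n → ℝ := v ∘ Sum.inl with hx
  set y : Fin m → ℝ := v ∘ Sum.inr with hyy
  have hv : v = Sum.elim x y := by ext (i | j) <;> rfl
  constructor
  · intro h
    rw [h𝒜, h𝒜hat, hv, Matrix.fromBlocks_mulVec, Matrix.fromBlocks_mulVec] at h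
    have h2 : Bᵀ *ᵥ x + (0 : Matrix (Fin m) (Fin m) ℝ) *ᵥ y
        = Bᵀ *ᵥ x + (-C) *ᵥ y := by
      have := congrArg (fun f => f ∘ Sum.inr) h
      funext j
      exact congrFun this j
    have hCy : C *ᵥ y = 0 := by
      have := add_left_cancel h2
      simpa [Matrix.neg_mulVec, neg_eq_zero] using this.symm
    have hBy : B *ᵥ y = 0 := by
      by_contra hne
      have hpos := hA.inv.dotProduct_mulVec_pos hne
      have : y ⬝ᵥ (C *ᵥ y) = (B *ᵥ y) ⬝ᵥ (A⁻¹ *ᵥ (B *ᵥ y)) := by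
        rw [hC, ← Matrix.mulVec_mulVec, ← Matrix.mulVec_mulVec,
          Matrix.dotProduct_mulVec, Matrix.vecMul_transpose]
      rw [hCy, dotProduct_zero] at this
      simp only [RCLike.re_to_real, star_trivial] at hpos
      rw [← this] at hpos
      exact lt_irrefl _ hpos
    have hy0 : y = 0 := binj B hB y hBy
    intro j
    have := congrFun hy0 j
    simpa [hyy] using this
  · intro h
    have hy0 : y = 0 := funext h
    rw [h𝒜, h𝒜hat, hv, Matrix.fromBlocks_mulVec, Matrix.fromBlocks_mulVec, hy0]
    simp [Matrix.neg_mulVec]
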